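/- Let G be a compact Hausdorff group and A ⊆ C(G) a closed subspace that is invariant under left and right translations. Then A is invariant under the involution f ↦ f*, where f*(g) = conjugate of f(g⁻¹). -/

import Mathlib

set_option linter.unusedSectionVars false
set_option maxHeartbeats 1000000
open MeasureTheory Measure ContinuousMap Set
open scoped ComplexConjugate

section aux
variable {G : Type*} [Group G] [TopologicalSpace G] [IsTopologicalGroup G]
    [CompactSpace G] [T2Space G]

noncomputable def lt (y : G) (h : C(G, ℂ)) : C(G, ℂ) :=
  h.comp (Homeomorph.mulLeft y⁻¹ : C(G, G))

noncomputable def rt (z : G) (h : C(G, ℂ)) : C(G, ℂ) :=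
  h.comp (Homeomorph.mulRight z : C(G, G))

@[simp] lemma lt_apply (y : G) (h : C(G, ℂ)) (x : G) : lt y h x = h (y⁻¹ * x) := rfl
@[simp] lemma rt_apply (z : G) (h : C(G, ℂ)) (x : G) : rt z h x = h (x * z) := rfl

lemma continuous_lt (h : C(G, ℂ)) : Continuous (fun y : G => lt y h) := by
  have : (fun y : G => lt y h)
      = ⇑(ContinuousMap.curry ⟨fun p : G × G => h (p.1⁻¹ * p.2), by fun_prop⟩) :=
    funext fun y => ContinuousMap.ext fun x => rfl
  rw [this]
  exact (ContinuousMap.curry _).continuous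

lemma continuous_rt (h : C(G, ℂ)) : Continuous (fun z : G => rt z h) := by
  have : (fun z : G => rt z h)
      = ⇑(ContinuousMap.curry ⟨fun p : G × G => h (p.2 * p.1), by fun_prop⟩) :=
    funext fun y => ContinuousMap.ext fun x => rfl
  rw [this]
  exact (ContinuousMap.curry _).continuous

lemma norm_lt_le (y : G) (h : C(G, ℂ)) : ‖lt y h‖ ≤ ‖h‖ :=
  (ContinuousMap.norm_le _ (norm_nonneg _)).mpr fun x => h.norm_coe_le_norm _

lemma norm_rt_le (z : G) (h : C(G, ℂ)) : ‖rt z h‖ ≤ ‖h‖ :=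
  (ContinuousMap.norm_le _ (norm_nonneg _)).mpr fun x => h.norm_coe_le_norm _

lemma sm_of_continuous {α E : Type*} [TopologicalSpace α] [CompactSpace α]
    [MeasurableSpace α] [OpensMeasurableSpace α] [PseudoMetricSpace E]
    {Φ : α → E} (h : Continuous Φ) : StronglyMeasurable Φ := by
  borelize E
  rw [stronglyMeasurable_iff_measurable_separable]
  exact ⟨h.measurable, (isCompact_range h).isSeparable⟩

lemma convex_coe (A : Submodule ℂ C(G, ℂ)) : Convex ℝ (A : Set C(G, ℂ)) := by
  intro x hx y hy a b _ _ _
  have hax : a • x = (a : ℂ) • x := (algebraMap_smul ℂ a x).symm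
  have hby : b • y = (b : ℂ) • y := (algebraMap_smul ℂ b y).symm
  rw [hax, hby]
  exact A.add_mem (A.smul_mem _ hx) (A.smul_mem _ hy)

variable [MeasurableSpace G] [OpensMeasurableSpace G] (μ : Measure G)

lemma integrable_smul_fam {w : G → ℂ} (hw : Integrable w μ) {Φ : G → C(G, ℂ)}
    (hΦ : Continuous Φ) {M : ℝ} (hM : ∀ y, ‖Φ y‖ ≤ M) :
    Integrable (fun y => w y • Φ y) μ := by
  have hsm : AEStronglyMeasurable (fun y => w y • Φ y) μ :=
    hw.aestronglyMeasurable.smul (sm_of_continuous hΦ).aestronglyMeasurable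
  refine (hw.norm.mul_const M).mono' hsm ?_
  filter_upwards with y
  rw [norm_smul]
  exact mul_le_mul_of_nonneg_left (hM y) (norm_nonneg _)

noncomputable def conv1 (w : G → ℂ) (h : C(G, ℂ)) : C(G, ℂ) := ∫ y, w y • lt y h ∂μ

noncomputable def conv2 (w : G → ℂ) (h : C(G, ℂ)) : C(G, ℂ) := ∫ z, w z • rt z h ∂μ

lemma evalCLM_apply (x : G) (h : C(G, ℂ)) : ContinuousMap.evalCLM ℂ x h = h x := rfl

lemma conv1_apply {w : G → ℂ} (hw : Integrable w μ) (h : C(G, ℂ)) (x : G) :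
    conv1 μ w h x = ∫ y, w y * h (y⁻¹ * x) ∂μ := by
  have hint : Integrable (fun y => w y • lt y h) μ :=
    integrable_smul_fam μ hw (continuous_lt h) (fun y => norm_lt_le y h)
  have h1 : conv1 μ w h x = ContinuousMap.evalCLM ℂ x (∫ y, w y • lt y h ∂μ) := rfl
  rw [h1, ← ContinuousLinearMap.integral_comp_comm _ hint]
  simp [_root_.evalCLM_apply, smul_eq_mul]

lemma conv2_apply {w : G → ℂ} (hw : Integrable w μ) (h : C(G, ℂ)) (x : G) :
    conv2 μ w h x = ∫ z, w z * h (x * z) ∂μ := by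
  have hint : Integrable (fun z => w z • rt z h) μ :=
    integrable_smul_fam μ hw (continuous_rt h) (fun z => norm_rt_le z h)
  have h1 : conv2 μ w h x = ContinuousMap.evalCLM ℂ x (∫ z, w z • rt z h ∂μ) := rfl
  rw [h1, ← ContinuousLinearMap.integral_comp_comm _ hint]
  simp [_root_.evalCLM_apply, smul_eq_mul]

lemma integral_mem_submodule [IsProbabilityMeasure μ] (A : Submodule ℂ C(G, ℂ))
    (hclosed : IsClosed (A : Set C(G, ℂ))) {F : G → C(G, ℂ)} (hF : Integrable F μ)
    (hmem : ∀ y, F y ∈ A) : (∫ y, F y ∂μ) ∈ A :=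
  (convex_coe A).integral_mem hclosed (Filter.Eventually.of_forall hmem) hF

lemma conv1_mem [IsProbabilityMeasure μ] (A : Submodule ℂ C(G, ℂ))
    (hclosed : IsClosed (A : Set C(G, ℂ))) {w : G → ℂ} (hw : Integrable w μ)
    {h : C(G, ℂ)} (hmem : ∀ y : G, lt y h ∈ A) : conv1 μ w h ∈ A :=
  integral_mem_submodule μ A hclosed
    (integrable_smul_fam μ hw (continuous_lt h) (fun y => norm_lt_le y h))
    (fun y => A.smul_mem _ (hmem y))

lemma conv2_mem [IsProbabilityMeasure μ] (A : Submodule ℂ C(G, ℂ))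
    (hclosed : IsClosed (A : Set C(G, ℂ))) {w : G → ℂ} (hw : Integrable w μ)
    {h : C(G, ℂ)} (hmem : ∀ z : G, rt z h ∈ A) : conv2 μ w h ∈ A :=
  integral_mem_submodule μ A hclosed
    (integrable_smul_fam μ hw (continuous_rt h) (fun z => norm_rt_le z h))
    (fun z => A.smul_mem _ (hmem z))


lemma cont_integrable [IsFiniteMeasure μ] {E : Type*} [NormedAddCommGroup E]
    {g : G → E} (hg : Continuous g) : Integrable g μ :=
  hg.integrable_of_hasCompactSupport
    (IsCompact.of_isClosed_subset isCompact_univ (isClosed_tsupport _) (Set.subset_univ _))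

end aux

section step1
open scoped InnerProductSpace
variable {G : Type*} [Group G] [TopologicalSpace G] [IsTopologicalGroup G]
    [CompactSpace G] [T2Space G] [MeasurableSpace G] [BorelSpace G]
    (μ : Measure G) [IsProbabilityMeasure μ] [μ.IsMulLeftInvariant] [μ.IsOpenPosMeasure]

lemma step1 (A : Submodule ℂ C(G, ℂ)) (hclosed : IsClosed (A : Set C(G, ℂ)))
    (hleft' : ∀ (y : G) (h : C(G, ℂ)), h ∈ A → lt y h ∈ A)
    (hright' : ∀ (z : G) (h : C(G, ℂ)), h ∈ A → rt z h ∈ A)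
    (f : C(G, ℂ)) (hf : f ∈ A) (fs : C(G, ℂ)) (hfs : ∀ x, fs x = conj (f x⁻¹)) :
    (ContinuousMap.toLp (E := ℂ) 2 μ ℂ) fs ∈
      (A.map ((ContinuousMap.toLp (E := ℂ) 2 μ ℂ :
        C(G, ℂ) →L[ℂ] Lp ℂ 2 μ)).toLinearMap).topologicalClosure := by
  set ι : C(G, ℂ) →L[ℂ] Lp ℂ 2 μ := (ContinuousMap.toLp (E := ℂ) 2 μ ℂ) with hι
  set K : Submodule ℂ (Lp ℂ 2 μ) := A.map (ι.toLinearMap) with hK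
  rw [← Submodule.orthogonal_orthogonal_eq_closure]
  rw [Submodule.mem_orthogonal]
  intro v hv
  have hv' : ∀ a ∈ A, ⟪ι a, v⟫_ℂ = 0 := fun a ha => hv (ι a) ⟨a, ha, rfl⟩
  have hvInt : Integrable (⇑v) μ := (Lp.memLp v).integrable (by norm_num)
  set c : C(G, ℂ) := conv1 μ (⇑v) f with hc
  have hcA : c ∈ A := conv1_mem μ A hclosed hvInt (fun y => hleft' y f hf)
  have hc_apply : ∀ x, c x = ∫ y, v y * f (y⁻¹ * x) ∂μ := conv1_apply μ hvInt f
  have hwInt : Integrable (fun z => conj (f z)) μ :=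
    cont_integrable μ ((Complex.continuous_conj).comp f.continuous)
  set D : C(G, ℂ) := conv2 μ (fun z => conj (f z)) c with hD
  have hDA : D ∈ A := conv2_mem μ A hclosed hwInt (fun z => hright' z c hcA)
  -- the auxiliary continuous linear functional `P h = ⟪ι c, ι h⟫`
  set P : C(G, ℂ) →L[ℂ] ℂ := (innerSL ℂ (ι c)).comp ι with hP
  have hPapp : ∀ h : C(G, ℂ), P h = ∫ y, conj (c y) * h y ∂μ := by
    intro h
    have : P h = ⟪ι c, ι h⟫_ℂ := rfl
    rw [this, MeasureTheory.L2.inner_def]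
    apply integral_congr_ae
    filter_upwards [ContinuousMap.coeFn_toLp (p := 2) (𝕜 := ℂ) μ c,
      ContinuousMap.coeFn_toLp (p := 2) (𝕜 := ℂ) μ h] with y h1 h2
    rw [h1, h2]
    rw [RCLike.inner_apply, mul_comm]
  -- compute `⟪ι D, v⟫ = ⟪ι c, ι c⟫`
  have hconjD : ∀ x, conj (D x) = P (lt x f) := by
    intro x
    rw [hPapp (lt x f)]
    have e1 : D x = ∫ z, conj (f z) * c (x * z) ∂μ := conv2_apply μ hwInt c x
    rw [e1, ← integral_conj]
    have e2 : ∀ z, conj (conj (f z) * c (x * z)) = f z * conj (c (x * z)) := by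
      intro z; rw [map_mul]; simp
    simp_rw [e2]
    have e3 := integral_mul_left_eq_self (μ := μ) (fun y => f (x⁻¹ * y) * conj (c y)) x
    simp only [inv_mul_cancel_left] at e3
    rw [e3]
    congr 1
    ext y
    simp only [lt_apply]
    ring
  have hkey : ⟪ι D, v⟫_ℂ = ⟪ι c, ι c⟫_ℂ := by
    rw [MeasureTheory.L2.inner_def]
    have : (∫ a, ⟪(ι D : Lp ℂ 2 μ) a, v a⟫_ℂ ∂μ) = ∫ a, P (lt a f) * v a ∂μ := by
      apply integral_congr_ae
      filter_upwards [ContinuousMap.coeFn_toLp (p := 2) (𝕜 := ℂ) μ D] with a h1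
      rw [RCLike.inner_apply, h1, hconjD a, mul_comm]
    rw [this]
    have hint : Integrable (fun y => v y • lt y f) μ :=
      integrable_smul_fam μ hvInt (continuous_lt f) (fun y => norm_lt_le y f)
    have e5 := ContinuousLinearMap.integral_comp_comm P hint
    have e6 : (∫ a, P (lt a f) * v a ∂μ) = ∫ a, P (v a • lt a f) ∂μ := by
      congr 1; ext a; rw [_root_.map_smul]; simp [smul_eq_mul]; ring
    rw [e6, e5]
    rfl
  have hz : ⟪ι c, ι c⟫_ℂ = 0 := by rw [← hkey]; exact hv' D hDA
  have hc0 : c = 0 := by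
    have : ι c = 0 := inner_self_eq_zero.mp hz
    exact ContinuousMap.toLp_injective μ (this.trans (_root_.map_zero ι).symm)
  -- conclude
  have : ⟪v, ι fs⟫_ℂ = conj (c 1) := by
    rw [MeasureTheory.L2.inner_def]
    have e7 : (∫ a, ⟪v a, (ι fs : Lp ℂ 2 μ) a⟫_ℂ ∂μ) = ∫ a, conj (v a) * conj (f a⁻¹) ∂μ := by
      apply integral_congr_ae
      filter_upwards [ContinuousMap.coeFn_toLp (p := 2) (𝕜 := ℂ) μ fs] with a h1
      rw [RCLike.inner_apply, h1, hfs a, mul_comm]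
    rw [e7]
    have e8 : ∀ a : G, conj (v a) * conj (f a⁻¹) = conj (v a * f a⁻¹) := by
      intro a; rw [map_mul]
    simp_rw [e8]
    rw [integral_conj]
    congr 1
    rw [hc_apply 1]
    congr 1; ext y; rw [mul_one]
  rw [this, hc0]
  simp

end step1

section step2
open scoped InnerProductSpace
variable {G : Type*} [Group G] [TopologicalSpace G] [IsTopologicalGroup G]
    [CompactSpace G] [T2Space G] [MeasurableSpace G] [BorelSpace G]
    (μ : Measure G) [IsProbabilityMeasure μ] [μ.IsMulLeftInvariant] [μ.IsOpenPosMeasure]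

lemma step2 (A : Submodule ℂ C(G, ℂ)) (hclosed : IsClosed (A : Set C(G, ℂ)))
    (hright' : ∀ (z : G) (h : C(G, ℂ)), h ∈ A → rt z h ∈ A)
    (fs : C(G, ℂ))
    (hcl : (ContinuousMap.toLp (E := ℂ) 2 μ ℂ) fs ∈
      (A.map ((ContinuousMap.toLp (E := ℂ) 2 μ ℂ :
        C(G, ℂ) →L[ℂ] Lp ℂ 2 μ)).toLinearMap).topologicalClosure) : fs ∈ A := by
  set ι : C(G, ℂ) →L[ℂ] Lp ℂ 2 μ := (ContinuousMap.toLp (E := ℂ) 2 μ ℂ) with hι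
  suffices h : fs ∈ closure (A : Set C(G, ℂ)) by rwa [hclosed.closure_eq] at h
  rw [Metric.mem_closure_iff]
  intro ε hε
  set U : Set G := {u : G | ‖rt u fs - fs‖ < ε / 4} with hUdef
  have hUopen : IsOpen U := by
    have hcont : Continuous (fun u : G => ‖rt u fs - fs‖) :=
      ((continuous_rt fs).sub continuous_const).norm
    exact hcont.isOpen_preimage _ isOpen_Iio
  have hU1 : (1 : G) ∈ U := by
    have h1 : rt (1 : G) fs - fs = 0 := by
      ext x; simp
    show ‖rt (1 : G) fs - fs‖ < ε / 4
    rw [h1, norm_zero]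
    linarith
  obtain ⟨φ, hφ0, hφ1, hφicc⟩ :=
    exists_continuous_zero_one_of_isCompact (hUopen.isClosed_compl.isCompact)
      (isClosed_singleton (x := (1 : G)))
      (Set.disjoint_singleton_right.mpr (by simpa using hU1))
  have hφ1' : φ 1 = 1 := hφ1 rfl
  have hφz : ∀ z : G, z ∉ U → φ z = 0 := fun z hz => hφ0 hz
  have hφnn : ∀ z : G, 0 ≤ φ z := fun z => (hφicc z).1
  have hφle1 : ∀ z : G, φ z ≤ 1 := fun z => (hφicc z).2
  set w : G → ℂ := fun z => ((φ z⁻¹ : ℝ) : ℂ) with hwdef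
  have hwcont : Continuous w := Complex.continuous_ofReal.comp (φ.continuous.comp continuous_inv)
  have hwInt : Integrable w μ := cont_integrable μ hwcont
  have hφinvInt : Integrable (fun z : G => φ z⁻¹) μ :=
    cont_integrable μ (φ.continuous.comp continuous_inv)
  set m : ℝ := ∫ z, φ z⁻¹ ∂μ with hmdef
  have hm_pos : 0 < m := by
    rw [hmdef, integral_pos_iff_support_of_nonneg (fun z => hφnn z⁻¹) hφinvInt]
    have hopen : IsOpen (Function.support fun z : G => φ z⁻¹) :=
      (φ.continuous.comp continuous_inv).isOpen_support
    refine hopen.measure_pos μ ⟨1, ?_⟩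
    simp [Function.mem_support, hφ1']
  have hwm : (∫ z, w z ∂μ) = (m : ℂ) := by rw [hwdef, hmdef]; exact integral_ofReal
  have hbound : ∀ x : G, ‖(conv2 μ w fs) x - (m : ℂ) * fs x‖ ≤ ε / 4 * m := by
    intro x
    have e1 : (conv2 μ w fs) x = ∫ z, w z * fs (x * z) ∂μ := conv2_apply μ hwInt fs x
    have e2 : (m : ℂ) * fs x = ∫ z, w z * fs x ∂μ := by
      rw [integral_mul_const, hwm]
    have hInt1 : Integrable (fun z => w z * fs (x * z)) μ :=
      cont_integrable μ (by fun_prop)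
    have hInt2 : Integrable (fun z => w z * fs x) μ := hwInt.mul_const _
    rw [e1, e2, ← integral_sub hInt1 hInt2]
    have e3 : ∀ z, w z * fs (x * z) - w z * fs x = w z * (fs (x * z) - fs x) := by
      intro z; ring
    simp_rw [e3]
    refine (norm_integral_le_integral_norm _).trans ?_
    have e4 : (∫ z, ‖w z * (fs (x * z) - fs x)‖ ∂μ) ≤ ∫ z, φ z⁻¹ * (ε / 4) ∂μ := by
      apply integral_mono (cont_integrable μ (by fun_prop)) (hφinvInt.mul_const _)
      intro z
      show ‖w z * (fs (x * z) - fs x)‖ ≤ φ z⁻¹ * (ε / 4)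
      rw [norm_mul]
      have hwnorm : ‖w z‖ = φ z⁻¹ := by
        simp [hwdef, Complex.norm_real, abs_of_nonneg (hφnn z⁻¹)]
      rw [hwnorm]
      by_cases hz : z⁻¹ ∈ U
      · refine mul_le_mul_of_nonneg_left ?_ (hφnn z⁻¹)
        have hzU : ‖rt z⁻¹ fs - fs‖ < ε / 4 := hz
        have e5 : fs (x * z) - fs x = -(((rt z⁻¹ fs) - fs) (x * z)) := by
          simp [rt_apply, ContinuousMap.sub_apply]
        rw [e5, norm_neg]
        exact le_of_lt (lt_of_le_of_lt ((rt z⁻¹ fs - fs).norm_coe_le_norm (x * z)) hzU)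
      · rw [hφz z⁻¹ hz]; simp
    refine e4.trans ?_
    rw [integral_mul_const, ← hmdef]
    exact le_of_eq (by ring)
  -- pick an approximation from `A` in the `L²`-norm
  have hclo : (ι fs : Lp ℂ 2 μ) ∈
      closure ((A.map (ι.toLinearMap) : Submodule ℂ (Lp ℂ 2 μ)) : Set (Lp ℂ 2 μ)) := hcl
  have hNnn : (0:ℝ) ≤ ‖ι‖ := norm_nonneg _
  set δ : ℝ := (ε / 4) * m / (‖ι‖ + 1) with hδdef
  have hδpos : 0 < δ := by
    apply div_pos (by positivity)
    linarith
  obtain ⟨b, hb, hbd⟩ := Metric.mem_closure_iff.mp hclo δ hδpos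
  rw [SetLike.mem_coe, Submodule.mem_map] at hb
  obtain ⟨a, haA, rfl⟩ := hb
  set ga : C(G, ℂ) := ((m : ℂ))⁻¹ • conv2 μ w a with hgadef
  have hgaA : ga ∈ A :=
    A.smul_mem _ (conv2_mem μ A hclosed hwInt (fun z => hright' z a haA))
  refine ⟨ga, hgaA, ?_⟩
  have hmC : ‖((m : ℂ))⁻¹‖ = m⁻¹ := by
    rw [norm_inv, Complex.norm_real, Real.norm_eq_abs, abs_of_pos hm_pos]
  have key : ∀ x : G, ‖fs x - ga x‖ ≤ ε / 4 + ε / 4 := by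
    intro x
    have t1 : ‖fs x - ((m : ℂ))⁻¹ * (conv2 μ w fs) x‖ ≤ ε / 4 := by
      have hms : ((m : ℂ)) ≠ 0 := by
        simp only [ne_eq, Complex.ofReal_eq_zero]
        exact hm_pos.ne'
      have e6 : fs x - ((m : ℂ))⁻¹ * (conv2 μ w fs) x
          = -(((m : ℂ))⁻¹ * ((conv2 μ w fs) x - (m : ℂ) * fs x)) := by
        field_simp
        ring
      rw [e6, norm_neg, norm_mul, hmC]
      calc m⁻¹ * ‖(conv2 μ w fs) x - (m : ℂ) * fs x‖
          ≤ m⁻¹ * (ε / 4 * m) :=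
            mul_le_mul_of_nonneg_left (hbound x) (inv_nonneg.mpr hm_pos.le)
        _ = ε / 4 := by
            rw [mul_comm (ε / 4) m, ← mul_assoc, inv_mul_cancel₀ hm_pos.ne', one_mul]
    have t2 : ‖((m : ℂ))⁻¹ * (conv2 μ w fs) x - ga x‖ ≤ ε / 4 := by
      have hga_x : ga x = ((m : ℂ))⁻¹ * (conv2 μ w a) x := by
        rw [hgadef]; simp [ContinuousMap.smul_apply, smul_eq_mul]
      rw [hga_x]
      have e7 : ((m : ℂ))⁻¹ * (conv2 μ w fs) x - ((m : ℂ))⁻¹ * (conv2 μ w a) x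
          = ((m : ℂ))⁻¹ * ((conv2 μ w fs) x - (conv2 μ w a) x) := by ring
      rw [e7, norm_mul, hmC]
      -- express the difference as an inner product
      set ψ : C(G, ℂ) := ⟨fun y => ((φ (y⁻¹ * x) : ℝ) : ℂ), by fun_prop⟩ with hψdef
      have hsub : (conv2 μ w fs) x - (conv2 μ w a) x = ⟪ι ψ, ι fs - ι a⟫_ℂ := by
        have e1 : (conv2 μ w fs) x = ∫ z, w z * fs (x * z) ∂μ := conv2_apply μ hwInt fs x
        have e2 : (conv2 μ w a) x = ∫ z, w z * a (x * z) ∂μ := conv2_apply μ hwInt a x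
        have hIfs : Integrable (fun z => w z * fs (x * z)) μ :=
          cont_integrable μ (by fun_prop)
        have hIa : Integrable (fun z => w z * a (x * z)) μ :=
          cont_integrable μ (by fun_prop)
        rw [e1, e2, ← integral_sub hIfs hIa]
        have e3 : ∀ z, w z * fs (x * z) - w z * a (x * z) = w z * (fs - a) (x * z) := by
          intro z; simp only [ContinuousMap.sub_apply]; ring
        simp_rw [e3]
        have e4 := integral_mul_left_eq_self (μ := μ)
          (fun y => ((φ (y⁻¹ * x) : ℝ) : ℂ) * (fs - a) y) x
        have e5 : (fun z => ((φ ((x * z)⁻¹ * x) : ℝ) : ℂ) * (fs - a) (x * z))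
            = fun z => w z * (fs - a) (x * z) := by
          funext z
          have hz : (x * z)⁻¹ * x = z⁻¹ := by group
          rw [hz]
        rw [e5] at e4
        rw [e4]
        have e8 : ⟪ι ψ, ι fs - ι a⟫_ℂ = ∫ y, ((φ (y⁻¹ * x) : ℝ) : ℂ) * (fs - a) y ∂μ := by
          rw [← _root_.map_sub ι fs a, MeasureTheory.L2.inner_def]
          apply integral_congr_ae
          filter_upwards [ContinuousMap.coeFn_toLp (p := 2) (𝕜 := ℂ) μ ψ,
            ContinuousMap.coeFn_toLp (p := 2) (𝕜 := ℂ) μ (fs - a)] with y h1 h2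
          rw [RCLike.inner_apply, h1, h2, mul_comm ((fs - a) y)]
          show conj (ψ y) * (fs - a) y = _
          rw [hψdef]
          simp [Complex.conj_ofReal]
        rw [e8]
      rw [hsub]
      have hψle : ‖ψ‖ ≤ 1 := by
        refine (ContinuousMap.norm_le _ zero_le_one).mpr fun y => ?_
        show ‖((φ (y⁻¹ * x) : ℝ) : ℂ)‖ ≤ 1
        rw [Complex.norm_real, Real.norm_eq_abs, abs_of_nonneg (hφnn _)]
        exact hφle1 _
      have hin : ‖⟪ι ψ, ι fs - ι a⟫_ℂ‖ ≤ ‖ι‖ * δ := by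
        refine (norm_inner_le_norm _ _).trans ?_
        have h1 : ‖ι ψ‖ ≤ ‖ι‖ := by
          have := ι.le_opNorm ψ
          calc ‖ι ψ‖ ≤ ‖ι‖ * ‖ψ‖ := this
            _ ≤ ‖ι‖ * 1 := mul_le_mul_of_nonneg_left hψle hNnn
            _ = ‖ι‖ := mul_one _
        have h2 : ‖ι fs - ι a‖ ≤ δ := by
          rw [← dist_eq_norm]
          exact hbd.le
        exact mul_le_mul h1 h2 (norm_nonneg _) hNnn
      calc m⁻¹ * ‖⟪ι ψ, ι fs - ι a⟫_ℂ‖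
          ≤ m⁻¹ * (‖ι‖ * δ) :=
            mul_le_mul_of_nonneg_left hin (inv_nonneg.mpr hm_pos.le)
        _ ≤ m⁻¹ * ((‖ι‖ + 1) * δ) := by
            have : ‖ι‖ * δ ≤ (‖ι‖ + 1) * δ :=
              mul_le_mul_of_nonneg_right (by linarith) hδpos.le
            exact mul_le_mul_of_nonneg_left this (inv_nonneg.mpr hm_pos.le)
        _ = ε / 4 := by
            rw [hδdef]
            field_simp
    calc ‖fs x - ga x‖
        = ‖(fs x - ((m : ℂ))⁻¹ * (conv2 μ w fs) x)
            + (((m : ℂ))⁻¹ * (conv2 μ w fs) x - ga x)‖ := by congr 1; ring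
      _ ≤ ‖fs x - ((m : ℂ))⁻¹ * (conv2 μ w fs) x‖
            + ‖((m : ℂ))⁻¹ * (conv2 μ w fs) x - ga x‖ := norm_add_le _ _
      _ ≤ ε / 4 + ε / 4 := add_le_add t1 t2
  have hfsga : dist fs ga < ε := by
    rw [dist_eq_norm]
    have : ‖fs - ga‖ ≤ ε / 4 + ε / 4 := by
      refine (ContinuousMap.norm_le _ (by linarith)).mpr fun x => ?_
      simpa [ContinuousMap.sub_apply] using key x
    linarith
  exact hfsga

end step2

/-- A closed subspace of `C(G)` on a compact Hausdorff group `G` which is invariant under all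
left and right translations is invariant under the involution `f ↦ f*`, where
`f*(g) = conj (f g⁻¹)`. -/
theorem stmt_11 {G : Type*} [Group G] [TopologicalSpace G] [IsTopologicalGroup G]
    [CompactSpace G] [T2Space G]
    (A : Submodule ℂ C(G, ℂ)) (hclosed : IsClosed (A : Set C(G, ℂ)))
    (hleft : ∀ g : G, ∀ f ∈ A, f.comp (Homeomorph.mulLeft g : C(G, G)) ∈ A)
    (hright : ∀ g : G, ∀ f ∈ A, f.comp (Homeomorph.mulRight g : C(G, G)) ∈ A) :
    ∀ f ∈ A, star (f.comp (Homeomorph.inv G : C(G, G))) ∈ A := by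
  intro f hf
  borelize G
  haveI : Nonempty G := ⟨1⟩
  let K₀ : TopologicalSpace.PositiveCompacts G :=
    ⟨⟨Set.univ, isCompact_univ⟩, by simpa using Set.univ_nonempty⟩
  set μ : Measure G := Measure.haarMeasure K₀ with hμ
  haveI hprob : IsProbabilityMeasure μ :=
    ⟨by rw [hμ]; exact Measure.haarMeasure_self (K₀ := K₀)⟩
  haveI : μ.IsOpenPosMeasure := by
    refine MeasureTheory.isOpenPosMeasure_of_mulLeftInvariant_of_compact (Set.univ)
      isCompact_univ ?_
    rw [measure_univ]
    exact one_ne_zero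
  have hleft' : ∀ (y : G) (h : C(G, ℂ)), h ∈ A → lt y h ∈ A := fun y h hh => hleft y⁻¹ h hh
  have hright' : ∀ (z : G) (h : C(G, ℂ)), h ∈ A → rt z h ∈ A := fun z h hh => hright z h hh
  have hfs : ∀ x : G, (star (f.comp (Homeomorph.inv G : C(G, G)))) x
      = (starRingEnd ℂ) (f x⁻¹) := fun x => rfl
  exact step2 μ A hclosed hright' _ (step1 μ A hclosed hleft' hright' f hf _ hfs)
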